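/- Let σ ∈ ℝ be fixed. Let (r_j) be a sequence of positive reals tending to +∞, let (ω_j) be positive reals with ω_j → 0, and let (r'_j), (r''_j) be sequences of reals satisfying |r'_j − r_j| < ω_j and |r''_j − r_j| < ω_j for all j. Then |Γ(σ + i r'_j)| / |Γ(σ + i r''_j)| → 1 as j → ∞. -/

import Mathlib

open Complex Filter Topology Finset

private lemma tele_sum (u : ℝ) (hu : 1 ≤ u) (N : ℕ) :
    ∑ k ∈ Finset.range N, (1:ℝ) / (((k:ℝ) + u)^2) ≤ 2 / u := by
  have hu0 : (0:ℝ) < u := lt_of_lt_of_le one_pos hu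
  have h : ∀ k ∈ Finset.range N,
      (1:ℝ)/(((k:ℝ)+u)^2) ≤ 2 * (1/((k:ℝ)+u) - 1/(((k+1:ℕ):ℝ)+u)) := by
    intro k _
    have hk0 : (0:ℝ) ≤ (k:ℝ) := Nat.cast_nonneg k
    have hk : (0:ℝ) < (k:ℝ) + u := by linarith
    have hk1 : (0:ℝ) < (k:ℝ) + 1 + u := by linarith
    push_cast
    rw [div_sub_div _ _ (ne_of_gt hk) (ne_of_gt hk1), ← mul_div_assoc,
      div_le_div_iff₀ (by positivity) (by positivity)]
    nlinarith
  calc ∑ k ∈ Finset.range N, (1:ℝ)/(((k:ℝ)+u)^2)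
      ≤ ∑ k ∈ Finset.range N, 2*(1/((k:ℝ)+u) - 1/(((k+1:ℕ):ℝ)+u)) :=
        Finset.sum_le_sum h
    _ = 2 * (1/(((0:ℕ):ℝ)+u) - 1/((N:ℝ)+u)) := by
        rw [← Finset.mul_sum, Finset.sum_range_sub' (fun k : ℕ => 1/((k:ℝ)+u))]
    _ ≤ 2/u := by
        have hN : (0:ℝ) < (N:ℝ) + u := by
          have : (0:ℝ) ≤ (N:ℝ) := Nat.cast_nonneg N
          linarith
        have h1 : (0:ℝ) ≤ 1/((N:ℝ)+u) := by positivity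
        rw [Nat.cast_zero, zero_add]
        have h2 : 2 * (1/u - 1/((N:ℝ)+u)) ≤ 2 * (1/u) := by nlinarith
        calc 2 * (1/u - 1/((N:ℝ)+u)) ≤ 2 * (1/u) := h2
          _ = 2/u := by ring

private lemma shifted_sum (σ t : ℝ) (ht : ((⌈|σ|⌉₊ : ℕ):ℝ) + 1 ≤ t) (N : ℕ) :
    ∑ k ∈ Finset.range N, (1:ℝ) / ((σ + k)^2 + t^2) ≤ 4 / (t - ((⌈|σ|⌉₊ : ℕ):ℝ)) := by
  set K : ℝ := ((⌈|σ|⌉₊ : ℕ):ℝ) with hKdef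
  have hσK : |σ| ≤ K := Nat.le_ceil _
  have hKnn : (0:ℝ) ≤ K := Nat.cast_nonneg _
  have hu : 1 ≤ t - K := by linarith
  have hu0 : (0:ℝ) < t - K := by linarith
  have ht0 : (0:ℝ) < t := by linarith
  have h : ∀ k ∈ Finset.range N,
      (1:ℝ)/((σ+k)^2+t^2) ≤ 2 * (1/(((k:ℝ) + (t-K))^2)) := by
    intro k _
    have hk0 : (0:ℝ) ≤ (k:ℝ) := Nat.cast_nonneg k
    have h1 : (0:ℝ) < (k:ℝ) + (t-K) := by linarith
    have hσ : -K ≤ σ := by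
      have := neg_abs_le σ; linarith
    have h2 : (k:ℝ) + (t - K) ≤ (σ + k) + t := by linarith
    have h3 : ((k:ℝ) + (t-K))^2 ≤ 2 * ((σ+(k:ℝ))^2 + t^2) := by
      nlinarith [sq_nonneg (σ + (k:ℝ) - t)]
    rw [← mul_div_assoc, mul_one, div_le_div_iff₀ (by positivity) (by positivity)]
    nlinarith
  calc ∑ k ∈ Finset.range N, (1:ℝ)/((σ+k)^2+t^2)
      ≤ ∑ k ∈ Finset.range N, 2 * (1/(((k:ℝ) + (t-K))^2)) := Finset.sum_le_sum h
    _ = 2 * ∑ k ∈ Finset.range N, (1:ℝ)/(((k:ℝ) + (t-K))^2) := by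
        rw [Finset.mul_sum]
    _ ≤ 2 * (2 / (t-K)) := by
        have := tele_sum (t-K) hu N
        nlinarith
    _ = 4 / (t-K) := by ring

private lemma abs_aux (σ t : ℝ) (k : ℕ) :
    ‖(σ:ℂ) + (t:ℂ) * Complex.I + (k:ℕ)‖ = Real.sqrt ((σ + k)^2 + t^2) := by
  rw [Complex.norm_def, Complex.normSq_apply]
  have h1 : ((σ:ℂ) + (t:ℂ) * Complex.I + (k:ℕ)).re = σ + k := by simp
  have h2 : ((σ:ℂ) + (t:ℂ) * Complex.I + (k:ℕ)).im = t := by simp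
  rw [h1, h2]
  ring_nf

private lemma abs_aux_pos (σ t : ℝ) (ht : 0 < t) (k : ℕ) :
    0 < ‖(σ:ℂ) + (t:ℂ) * Complex.I + (k:ℕ)‖ := by
  rw [abs_aux]
  exact Real.sqrt_pos.mpr (by positivity)

private lemma prod_ratio_le (σ t₁ t₂ : ℝ) (ht₁ : ((⌈|σ|⌉₊ : ℕ):ℝ) + 1 ≤ t₁)
    (ht₂ : 0 < t₂) (N : ℕ) :
    ∏ k ∈ Finset.range N,
      ‖(σ:ℂ) + (t₂:ℂ) * Complex.I + (k:ℕ)‖ /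
        ‖(σ:ℂ) + (t₁:ℂ) * Complex.I + (k:ℕ)‖
      ≤ Real.exp (|t₂^2 - t₁^2| * (2 / (t₁ - ((⌈|σ|⌉₊ : ℕ):ℝ)))) := by
  set K : ℝ := ((⌈|σ|⌉₊ : ℕ):ℝ) with hKdef
  have hKnn : (0:ℝ) ≤ K := Nat.cast_nonneg _
  have ht₁0 : (0:ℝ) < t₁ := by linarith
  have hu0 : (0:ℝ) < t₁ - K := by linarith
  set d : ℝ := |t₂^2 - t₁^2| with hd
  have hd0 : 0 ≤ d := abs_nonneg _
  have key : ∀ k ∈ Finset.range N,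
      ‖(σ:ℂ) + (t₂:ℂ) * Complex.I + (k:ℕ)‖ /
        ‖(σ:ℂ) + (t₁:ℂ) * Complex.I + (k:ℕ)‖
      ≤ Real.exp ((d/2) * (1 / ((σ+(k:ℝ))^2 + t₁^2))) := by
    intro k _
    rw [abs_aux, abs_aux]
    have hA0 : 0 < (σ+(k:ℝ))^2 + t₁^2 := by positivity
    have hB0 : (0:ℝ) ≤ (σ+(k:ℝ))^2 + t₂^2 := by positivity
    have hBA : ((σ+(k:ℝ))^2 + t₂^2) / ((σ+(k:ℝ))^2 + t₁^2)
        ≤ Real.exp (d / ((σ+(k:ℝ))^2 + t₁^2)) := by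
      have h1 : ((σ+(k:ℝ))^2 + t₂^2) / ((σ+(k:ℝ))^2 + t₁^2)
          ≤ 1 + d / ((σ+(k:ℝ))^2 + t₁^2) := by
        rw [div_le_iff₀ hA0, add_mul, one_mul, div_mul_cancel₀ _ (ne_of_gt hA0)]
        have : t₂^2 - t₁^2 ≤ d := le_abs_self _
        linarith
      have h2 := Real.add_one_le_exp (d / ((σ+(k:ℝ))^2 + t₁^2))
      linarith
    calc Real.sqrt ((σ+(k:ℝ))^2 + t₂^2) / Real.sqrt ((σ+(k:ℝ))^2 + t₁^2)
        = Real.sqrt (((σ+(k:ℝ))^2 + t₂^2) / ((σ+(k:ℝ))^2 + t₁^2)) :=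
          (Real.sqrt_div hB0 _).symm
      _ ≤ Real.sqrt (Real.exp (d / ((σ+(k:ℝ))^2 + t₁^2))) := Real.sqrt_le_sqrt hBA
      _ = Real.exp (d / ((σ+(k:ℝ))^2 + t₁^2) / 2) := (Real.exp_half _).symm
      _ = Real.exp ((d/2) * (1 / ((σ+(k:ℝ))^2 + t₁^2))) := by ring_nf
  calc ∏ k ∈ Finset.range N,
      ‖(σ:ℂ) + (t₂:ℂ) * Complex.I + (k:ℕ)‖ /
        ‖(σ:ℂ) + (t₁:ℂ) * Complex.I + (k:ℕ)‖
      ≤ ∏ k ∈ Finset.range N, Real.exp ((d/2) * (1 / ((σ+(k:ℝ))^2 + t₁^2))) := by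
        refine Finset.prod_le_prod (fun k _ => ?_) key
        exact div_nonneg (norm_nonneg _) (norm_nonneg _)
    _ = Real.exp (∑ k ∈ Finset.range N, (d/2) * (1 / ((σ+(k:ℝ))^2 + t₁^2))) :=
        (Real.exp_sum _ _).symm
    _ ≤ Real.exp (d * (2 / (t₁ - K))) := by
        apply Real.exp_le_exp.mpr
        rw [← Finset.mul_sum]
        have hs := shifted_sum σ t₁ ht₁ N
        calc (d/2) * ∑ k ∈ Finset.range N, (1:ℝ) / ((σ+(k:ℝ))^2 + t₁^2)
            ≤ (d/2) * (4 / (t₁ - K)) := by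
              apply mul_le_mul_of_nonneg_left _ (by positivity)
              exact hs
          _ = d * (2 / (t₁ - K)) := by ring

theorem gamma_abs_ratio_tendsto_one
    (σ : ℝ) (r ω r' r'' : ℕ → ℝ)
    (hrpos : ∀ j, 0 < r j)
    (hr : Tendsto r atTop atTop)
    (hωpos : ∀ j, 0 < ω j)
    (hω : Tendsto ω atTop (𝓝 0))
    (hr' : ∀ j, |r' j - r j| < ω j)
    (hr'' : ∀ j, |r'' j - r j| < ω j) :
    Tendsto (fun j =>
        ‖Complex.Gamma ((σ : ℂ) + (r' j : ℂ) * Complex.I)‖ /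
        ‖Complex.Gamma ((σ : ℂ) + (r'' j : ℂ) * Complex.I)‖)
      atTop (𝓝 1) := by
  have hKnn : (0:ℝ) ≤ ((⌈|σ|⌉₊ : ℕ):ℝ) := Nat.cast_nonneg _
  set K : ℝ := ((⌈|σ|⌉₊ : ℕ):ℝ) with hKdef
  have hev : ∀ᶠ j in atTop,
      Real.exp (-(24 * ω j)) ≤
        ‖Complex.Gamma ((σ : ℂ) + (r' j : ℂ) * Complex.I)‖ /
          ‖Complex.Gamma ((σ : ℂ) + (r'' j : ℂ) * Complex.I)‖ ∧
      ‖Complex.Gamma ((σ : ℂ) + (r' j : ℂ) * Complex.I)‖ /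
          ‖Complex.Gamma ((σ : ℂ) + (r'' j : ℂ) * Complex.I)‖
        ≤ Real.exp (24 * ω j) := by
    filter_upwards [hr.eventually (eventually_ge_atTop (2*K + 4)),
      hω.eventually (gt_mem_nhds one_pos)] with j hrj hωj
    have hω0 := hωpos j
    have hrj0 := hrpos j
    have h1 := abs_lt.mp (hr' j)
    have h2 := abs_lt.mp (hr'' j)
    have ht1 : K + 1 ≤ r' j := by linarith
    have ht2 : K + 1 ≤ r'' j := by linarith
    have ht1p : 0 < r' j := by linarith
    have ht2p : 0 < r'' j := by linarith
    -- the d * (2/(t-K)) ≤ 24 ω bound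
    have hdabs : |(r'' j)^2 - (r' j)^2| ≤ 6 * ω j * r j := by
      have heq : (r'' j)^2 - (r' j)^2 = (r'' j - r' j) * (r'' j + r' j) := by ring
      rw [heq, abs_mul]
      have e1 : |r'' j - r' j| ≤ 2 * ω j := by
        calc |r'' j - r' j| = |(r'' j - r j) + (r j - r' j)| := by ring_nf
          _ ≤ |r'' j - r j| + |r j - r' j| := abs_add_le _ _
          _ ≤ 2 * ω j := by
              rw [abs_sub_comm (r j)]
              linarith [le_of_lt (hr' j), le_of_lt (hr'' j)]
      have e2 : |r'' j + r' j| ≤ 3 * r j := by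
        rw [abs_of_pos (by linarith)]
        linarith
      calc |r'' j - r' j| * |r'' j + r' j| ≤ (2 * ω j) * (3 * r j) :=
            mul_le_mul e1 e2 (abs_nonneg _) (by positivity)
        _ = 6 * ω j * r j := by ring
    have hbound : ∀ t : ℝ, r j / 2 ≤ t - K →
        |(r'' j)^2 - (r' j)^2| * (2/(t - K)) ≤ 24 * ω j := by
      intro t htK
      have h2t : 2/(t-K) ≤ 4 / r j := by
        rw [div_le_div_iff₀ (by linarith) hrj0]
        linarith
      calc |(r'' j)^2 - (r' j)^2| * (2/(t-K)) ≤ (6 * ω j * r j) * (4 / r j) := by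
            apply mul_le_mul hdabs h2t (div_nonneg (by norm_num) (by linarith)) (by positivity)
        _ = 24 * ω j := by field_simp; ring
    have huA : r j / 2 ≤ r' j - K := by linarith
    have huB : r j / 2 ≤ r'' j - K := by linarith
    -- product bounds
    have hprodup : ∀ N, ∏ k ∈ Finset.range N,
        ‖(σ:ℂ) + (r'' j:ℂ) * Complex.I + (k:ℕ)‖ /
          ‖(σ:ℂ) + (r' j:ℂ) * Complex.I + (k:ℕ)‖ ≤ Real.exp (24 * ω j) :=
      fun N => le_trans (prod_ratio_le σ (r' j) (r'' j) ht1 ht2p N)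
        (Real.exp_le_exp.mpr (hbound _ huA))
    have hproddown : ∀ N, ∏ k ∈ Finset.range N,
        ‖(σ:ℂ) + (r' j:ℂ) * Complex.I + (k:ℕ)‖ /
          ‖(σ:ℂ) + (r'' j:ℂ) * Complex.I + (k:ℕ)‖ ≤ Real.exp (24 * ω j) := by
      intro N
      refine le_trans (prod_ratio_le σ (r'' j) (r' j) ht2 ht1p N) ?_
      apply Real.exp_le_exp.mpr
      rw [abs_sub_comm]
      exact hbound _ huB
    have hprodpos : ∀ N, 0 < ∏ k ∈ Finset.range N,
        ‖(σ:ℂ) + (r' j:ℂ) * Complex.I + (k:ℕ)‖ /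
          ‖(σ:ℂ) + (r'' j:ℂ) * Complex.I + (k:ℕ)‖ := by
      intro N
      exact Finset.prod_pos fun k _ =>
        div_pos (abs_aux_pos σ (r' j) ht1p k) (abs_aux_pos σ (r'' j) ht2p k)
    have hlowN : ∀ N, Real.exp (-(24 * ω j)) ≤ ∏ k ∈ Finset.range N,
        ‖(σ:ℂ) + (r'' j:ℂ) * Complex.I + (k:ℕ)‖ /
          ‖(σ:ℂ) + (r' j:ℂ) * Complex.I + (k:ℕ)‖ := by
      intro N
      have hmul : (∏ k ∈ Finset.range N,
          ‖(σ:ℂ) + (r' j:ℂ) * Complex.I + (k:ℕ)‖ /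
            ‖(σ:ℂ) + (r'' j:ℂ) * Complex.I + (k:ℕ)‖) *
          (∏ k ∈ Finset.range N,
          ‖(σ:ℂ) + (r'' j:ℂ) * Complex.I + (k:ℕ)‖ /
            ‖(σ:ℂ) + (r' j:ℂ) * Complex.I + (k:ℕ)‖) = 1 := by
        rw [← Finset.prod_mul_distrib]
        apply Finset.prod_eq_one
        intro k _
        rw [div_mul_div_comm, mul_comm ‖(σ:ℂ) + (r' j:ℂ) * Complex.I + (k:ℕ)‖,
          div_self (mul_ne_zero (abs_aux_pos σ (r'' j) ht2p k).ne' (abs_aux_pos σ (r' j) ht1p k).ne')]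
      have hPinv : (∏ k ∈ Finset.range N,
          ‖(σ:ℂ) + (r'' j:ℂ) * Complex.I + (k:ℕ)‖ /
            ‖(σ:ℂ) + (r' j:ℂ) * Complex.I + (k:ℕ)‖)
          = (∏ k ∈ Finset.range N,
          ‖(σ:ℂ) + (r' j:ℂ) * Complex.I + (k:ℕ)‖ /
            ‖(σ:ℂ) + (r'' j:ℂ) * Complex.I + (k:ℕ)‖)⁻¹ :=
        eq_inv_of_mul_eq_one_right hmul
      rw [Real.exp_neg, hPinv]
      exact inv_anti₀ (hprodpos N) (hproddown N)
    -- limit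
    have hne2 : Complex.Gamma ((σ:ℂ) + (r'' j:ℂ) * Complex.I) ≠ 0 := by
      apply Complex.Gamma_ne_zero
      intro m hm
      have : ((σ:ℂ) + (r'' j:ℂ) * Complex.I).im = ((-(m:ℂ)).im) := by rw [hm]
      simp at this
      linarith
    have habsne : ‖Complex.Gamma ((σ:ℂ) + (r'' j:ℂ) * Complex.I)‖ ≠ 0 :=
      norm_ne_zero_iff.mpr hne2
    have hG1 : Tendsto (fun n => ‖Complex.GammaSeq ((σ:ℂ) + (r' j:ℂ) * Complex.I) n‖)
        atTop (𝓝 (‖Complex.Gamma ((σ:ℂ) + (r' j:ℂ) * Complex.I)‖)) :=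
      (continuous_norm.tendsto _).comp (Complex.GammaSeq_tendsto_Gamma _)
    have hG2 : Tendsto (fun n => ‖Complex.GammaSeq ((σ:ℂ) + (r'' j:ℂ) * Complex.I) n‖)
        atTop (𝓝 (‖Complex.Gamma ((σ:ℂ) + (r'' j:ℂ) * Complex.I)‖)) :=
      (continuous_norm.tendsto _).comp (Complex.GammaSeq_tendsto_Gamma _)
    have hdiv := hG1.div hG2 habsne
    have hCabs : ∀ (t : ℝ), 0 < t → ∀ n : ℕ, 1 ≤ n →
        ‖Complex.GammaSeq ((σ:ℂ) + (t:ℂ) * Complex.I) n‖ =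
          ((n:ℝ) ^ σ * (Nat.factorial n : ℝ)) / ∏ k ∈ Finset.range (n+1),
            ‖(σ:ℂ) + (t:ℂ) * Complex.I + (k:ℕ)‖ := by
      intro t ht n hn
      have hn0 : (0:ℝ) < (n:ℝ) := by exact_mod_cast hn
      rw [Complex.GammaSeq, norm_div, norm_mul, norm_prod]
      congr 2
      · have hcast : ((n:ℕ):ℂ) = (((n:ℕ):ℝ):ℂ) := by push_cast; rfl
        rw [hcast, Complex.norm_cpow_eq_rpow_re_of_pos hn0]
        congr 1
        simp
      · exact Complex.norm_natCast _
    have hid : ∀ᶠ n in atTop,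
        ‖Complex.GammaSeq ((σ:ℂ) + (r' j:ℂ) * Complex.I) n‖ /
          ‖Complex.GammaSeq ((σ:ℂ) + (r'' j:ℂ) * Complex.I) n‖ =
        ∏ k ∈ Finset.range (n+1),
          ‖(σ:ℂ) + (r'' j:ℂ) * Complex.I + (k:ℕ)‖ /
            ‖(σ:ℂ) + (r' j:ℂ) * Complex.I + (k:ℕ)‖ := by
      filter_upwards [eventually_ge_atTop 1] with n hn
      rw [hCabs (r' j) ht1p n hn, hCabs (r'' j) ht2p n hn, Finset.prod_div_distrib]
      have hn0 : (0:ℝ) < (n:ℝ) := by exact_mod_cast hn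
      have hC : (n:ℝ) ^ σ * (Nat.factorial n : ℝ) ≠ 0 := by positivity
      have hP1 : ∏ k ∈ Finset.range (n+1),
          ‖(σ:ℂ) + (r' j:ℂ) * Complex.I + (k:ℕ)‖ ≠ 0 :=
        ne_of_gt (Finset.prod_pos fun k _ => abs_aux_pos σ (r' j) ht1p k)
      have hP2 : ∏ k ∈ Finset.range (n+1),
          ‖(σ:ℂ) + (r'' j:ℂ) * Complex.I + (k:ℕ)‖ ≠ 0 :=
        ne_of_gt (Finset.prod_pos fun k _ => abs_aux_pos σ (r'' j) ht2p k)
      field_simp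
    have hPtend : Tendsto (fun n => ∏ k ∈ Finset.range (n+1),
        ‖(σ:ℂ) + (r'' j:ℂ) * Complex.I + (k:ℕ)‖ /
          ‖(σ:ℂ) + (r' j:ℂ) * Complex.I + (k:ℕ)‖) atTop
        (𝓝 (‖Complex.Gamma ((σ:ℂ) + (r' j:ℂ) * Complex.I)‖ /
          ‖Complex.Gamma ((σ:ℂ) + (r'' j:ℂ) * Complex.I)‖)) :=
      Filter.Tendsto.congr' hid hdiv
    constructor
    · exact ge_of_tendsto' hPtend (fun n => hlowN (n+1))
    · exact le_of_tendsto' hPtend (fun n => hprodup (n+1))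
  have hexp1 : Tendsto (fun j => Real.exp (-(24 * ω j))) atTop (𝓝 1) := by
    have h0 : Tendsto (fun j => -(24 * ω j)) atTop (𝓝 0) := by
      simpa using (hω.const_mul 24).neg
    simpa [Function.comp_def] using (Real.continuous_exp.tendsto 0).comp h0
  have hexp2 : Tendsto (fun j => Real.exp (24 * ω j)) atTop (𝓝 1) := by
    have h0 : Tendsto (fun j => 24 * ω j) atTop (𝓝 0) := by
      simpa using hω.const_mul 24
    simpa [Function.comp_def] using (Real.continuous_exp.tendsto 0).comp h0
  exact tendsto_of_tendsto_of_tendsto_of_le_of_le' hexp1 hexp2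
    (hev.mono fun j h => h.1) (hev.mono fun j h => h.2)
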